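/- For every integer k with 0 ≤ k ≤ n−6: there exists a nonzero real number c such that ε_1 · (ε_{n−4−k} · (ε_{n−4−k} · (ε*_{n−3−k} ∧ η* ⊗ ε_{2n−6}))) = c · ∂(X* ⊗ ε_{n−4−k}), where the dots denote the g⁰-action on C²(m,g); in particular, every g⁰-invariant subspace of C²(m,g) containing ε*_{n−3−k} ∧ η* ⊗ ε_{2n−6} contains a nonzero element of ∂(C¹₊(m,g)). -/

import Mathlib

noncomputable section

open scoped BigOperators

/-- The underlying vector space of `gl₂(ℝ)`, with basis `Y, H, E, X` at indices `0,1,2,3`. -/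
abbrev G2 : Type := Fin 4 → ℝ

/-- The underlying vector space of the Heisenberg algebra `heis_{2n-5}`:
coefficients of `ε_1, …, ε_{2n-6}` together with the coefficient of `η`. -/
abbrev Hs (n : ℕ) : Type := (Fin (2*n-6) → ℝ) × ℝ

/-- The underlying vector space of `g = gl₂(ℝ) ⋉ heis_{2n-5}`. -/
abbrev Gg (n : ℕ) : Type := G2 × Hs n

/-- The basis vector `ε_p` (1-based index `p`). -/
def epsV (n : ℕ) (p : ℕ) : Hs n := (fun i => if i.val + 1 = p then 1 else 0, 0)

/-- The central basis vector `η`. -/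
def etaV (n : ℕ) : Hs n := (0, 1)

/-- The Heisenberg bracket, encoding `[ε_i, ε_{2n-5-i}] = (-1)^i η`. -/
def heisBr (n : ℕ) (x y : Hs n) : Hs n :=
  (0, ∑ i : Fin (2*n-6), (-1 : ℝ)^(i.val+1) * x.1 i * y.1 i.rev)

/-- The `gl₂(ℝ)` bracket: `[X,Y]=H`, `[H,X]=2X`, `[H,Y]=-2Y`, and `E` is central. -/
def gl2Br (a b : G2) : G2 :=
  ![-2*(a 1 * b 0 - a 0 * b 1), a 3 * b 0 - a 0 * b 3, 0, 2*(a 1 * b 3 - a 3 * b 1)]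

/-- The map `φ : gl₂(ℝ) → End(heis_{2n-5})` from the paper. -/
def phi (n : ℕ) (a : G2) (v : Hs n) : Hs n :=
  (fun i =>
      a 1 * (2*(i.val:ℝ) + 7 - 2*(n:ℝ)) * v.1 i
    + a 2 * v.1 i
    + a 3 * (if h : 0 < i.val then v.1 ⟨i.val - 1, by have := i.isLt; omega⟩ else 0)
    + a 0 * (((i.val:ℝ)+1) * (2*(n:ℝ) - 7 - (i.val:ℝ))) *
        (if h : i.val + 1 < 2*n-6 then v.1 ⟨i.val+1, h⟩ else 0),
   2 * a 2 * v.2)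

/-- The bracket of the semidirect product `g = gl₂(ℝ) ⋉_φ heis_{2n-5}`. -/
def gBr (n : ℕ) (x y : Gg n) : Gg n :=
  (gl2Br x.1 y.1, phi n x.1 y.2 - phi n y.1 x.2 + heisBr n x.2 y.2)

def bY (n : ℕ) : Gg n := (![1,0,0,0], 0)
def bH (n : ℕ) : Gg n := (![0,1,0,0], 0)
def bE (n : ℕ) : Gg n := (![0,0,1,0], 0)
def bX (n : ℕ) : Gg n := (![0,0,0,1], 0)
def bEps (n : ℕ) (p : ℕ) : Gg n := (0, epsV n p)
def bEta (n : ℕ) : Gg n := (0, etaV n)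

/-- The weight-`w` graded component of `g` in the grading of `s^{k,n}`: the span of the
basis elements of weight `w`, where `wght Y = 1`, `wght H = wght E = 0`, `wght X = -1`,
`wght ε_p = n-4-k-p`, `wght η = -3-2k`. -/
def gComp (n k : ℕ) (w : ℤ) : Submodule ℝ (Gg n) :=
  Submodule.span ℝ {v : Gg n |
    (v = bY n ∧ w = 1) ∨ ((v = bH n ∨ v = bE n) ∧ w = 0) ∨ (v = bX n ∧ w = -1) ∨
    (∃ p : ℕ, 1 ≤ p ∧ p ≤ 2*n-6 ∧ v = bEps n p ∧ w = (n:ℤ) - 4 - (k:ℤ) - (p:ℤ)) ∨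
    (v = bEta n ∧ w = -3 - 2*(k:ℤ))}

/-- The negative part `m = s^{k,n}` of `g` (for `0 ≤ k ≤ n-4`): the span of the basis
elements of negative weight, i.e. of `X`, `ε_p` for `n-3-k ≤ p ≤ 2n-6`, and `η`. -/
def mSub (n k : ℕ) : Submodule ℝ (Gg n) where
  carrier := {x | x.1 0 = 0 ∧ x.1 1 = 0 ∧ x.1 2 = 0 ∧
    ∀ i : Fin (2*n-6), ((i.val:ℤ) + 1 < (n:ℤ) - 3 - (k:ℤ) → x.2.1 i = 0)}
  add_mem' := by
    rintro a b ⟨ha0, ha1, ha2, ha3⟩ ⟨hb0, hb1, hb2, hb3⟩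
    exact ⟨by simp [ha0, hb0], by simp [ha1, hb1], by simp [ha2, hb2],
      fun i hi => by simp [ha3 i hi, hb3 i hi]⟩
  zero_mem' := ⟨rfl, rfl, rfl, fun i _ => rfl⟩
  smul_mem' := by
    rintro c a ⟨ha0, ha1, ha2, ha3⟩
    exact ⟨by simp [ha0], by simp [ha1], by simp [ha2], fun i hi => by simp [ha3 i hi]⟩

/-- The non-negative part `g⁰` of `g` in the grading of `s^{k,n}`. -/
def g0Sub (n k : ℕ) : Submodule ℝ (Gg n) where
  carrier := {x | x.1 3 = 0 ∧ x.2.2 = 0 ∧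
    ∀ i : Fin (2*n-6), ((n:ℤ) - 3 - (k:ℤ) ≤ (i.val:ℤ) + 1 → x.2.1 i = 0)}
  add_mem' := by
    rintro a b ⟨ha0, ha1, ha3⟩ ⟨hb0, hb1, hb3⟩
    exact ⟨by simp [ha0, hb0], by simp [ha1, hb1], fun i hi => by simp [ha3 i hi, hb3 i hi]⟩
  zero_mem' := ⟨rfl, rfl, fun i _ => rfl⟩
  smul_mem' := by
    rintro c a ⟨ha0, ha1, ha3⟩
    exact ⟨by simp [ha0], by simp [ha1], fun i hi => by simp [ha3 i hi]⟩

/-- The negative part `m` of `g`, as a type. -/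
abbrev MT (n k : ℕ) := ↥(mSub n k)

/-- The projection `π_m : g → m` along `g⁰`. -/
def Pm (n k : ℕ) (x : Gg n) : Gg n :=
  (![0, 0, 0, x.1 3],
   (fun i => if (n:ℤ) - 3 - (k:ℤ) ≤ (i.val:ℤ) + 1 then x.2.1 i else 0, x.2.2))

lemma Pm_mem (n k : ℕ) (x : Gg n) : Pm n k x ∈ mSub n k := by
  refine ⟨?_, ?_, ?_, fun i hi => ?_⟩
  · simp [Pm]
  · simp [Pm]
  · simp [Pm]
  · show (if (n:ℤ) - 3 - (k:ℤ) ≤ (i.val:ℤ) + 1 then x.2.1 i else 0) = 0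
    rw [if_neg (by omega)]

/-- The projection `π_m : g → m`, viewed as a map into `m`. -/
def ptoM (n k : ℕ) (x : Gg n) : MT n k := ⟨Pm n k x, Pm_mem n k x⟩

/-- The Lie bracket of `m` (the bracket of `g` restricted to `m`; since `m` is closed
under the bracket, composing with the projection `π_m` does not change the value). -/
def mBrM (n k : ℕ) (x y : MT n k) : MT n k := ptoM n k (gBr n x.1 y.1)

/-- `ψ` is an ℝ-linear map `m → g`, i.e. an element of `C¹(m,g)`. -/
def IsLin1 (n k : ℕ) (ψ : MT n k → Gg n) : Prop :=
  (∀ x y, ψ (x + y) = ψ x + ψ y) ∧ ∀ (c : ℝ) (x), ψ (c • x) = c • ψ x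

/-- `ψ` is an alternating ℝ-bilinear map `m × m → g`, i.e. an element of `C²(m,g)`. -/
def IsAlt2 (n k : ℕ) (ψ : MT n k → MT n k → Gg n) : Prop :=
  (∀ y, IsLin1 n k (fun x => ψ x y)) ∧ (∀ x, IsLin1 n k (ψ x)) ∧ ∀ x, ψ x x = 0

/-- The coboundary `∂ : C¹(m,g) → C²(m,g)`,
`(∂φ)(x,y) = [x, φ y] - [y, φ x] + φ [x,y]`. -/
def cobound (n k : ℕ) (φ : MT n k → Gg n) : MT n k → MT n k → Gg n :=
  fun x y => gBr n x.1 (φ y) - gBr n y.1 (φ x) + φ (mBrM n k x y)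

/-- A 1-cochain is homogeneous of weight `w` if `ψ(g_p) ⊆ g_{p+w}` for all `p < 0`. -/
def Homog1 (n k : ℕ) (w : ℤ) (ψ : MT n k → Gg n) : Prop :=
  ∀ p : ℤ, p < 0 → ∀ x : MT n k, (x : Gg n) ∈ gComp n k p → ψ x ∈ gComp n k (p + w)

/-- A 2-cochain is homogeneous of weight `w` if `ψ(g_p × g_q) ⊆ g_{p+q+w}` for `p,q < 0`. -/
def Homog2 (n k : ℕ) (w : ℤ) (ψ : MT n k → MT n k → Gg n) : Prop :=
  ∀ p q : ℤ, p < 0 → q < 0 → ∀ x y : MT n k,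
    (x : Gg n) ∈ gComp n k p → (y : Gg n) ∈ gComp n k q → ψ x y ∈ gComp n k (p + q + w)

/-- `C¹₊(m,g)`: the span of the homogeneous 1-cochains of positive weight. -/
def C1plus (n k : ℕ) : Submodule ℝ (MT n k → Gg n) :=
  Submodule.span ℝ {ψ | IsLin1 n k ψ ∧ ∃ w : ℤ, 0 < w ∧ Homog1 n k w ψ}

/-- `C²₊(m,g)`: the span of the homogeneous alternating 2-cochains of positive weight. -/
def C2plus (n k : ℕ) : Submodule ℝ (MT n k → MT n k → Gg n) :=
  Submodule.span ℝ {ψ | IsAlt2 n k ψ ∧ ∃ w : ℤ, 0 < w ∧ Homog2 n k w ψ}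

/-- The image `∂(C¹₊(m,g)) ⊆ C²(m,g)`. -/
def imDel (n k : ℕ) : Submodule ℝ (MT n k → MT n k → Gg n) :=
  Submodule.span ℝ (cobound n k '' {φ | φ ∈ C1plus n k})

/-- The action of `A ∈ g⁰` on 1-cochains: `(A·ψ)(x) = [A, ψ x] - ψ(π_m [A, x])`. -/
def act1 (n k : ℕ) (A : Gg n) (ψ : MT n k → Gg n) : MT n k → Gg n :=
  fun x => gBr n A (ψ x) - ψ (ptoM n k (gBr n A x.1))

/-- The action of `A ∈ g⁰` on 2-cochains:
`(A·ψ)(x,y) = [A, ψ x y] - ψ(π_m [A, x]) y - ψ x (π_m [A, y])`. -/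
def act2 (n k : ℕ) (A : Gg n) (ψ : MT n k → MT n k → Gg n) : MT n k → MT n k → Gg n :=
  fun x y => gBr n A (ψ x y) - ψ (ptoM n k (gBr n A x.1)) y - ψ x (ptoM n k (gBr n A y.1))

/-- The coefficient of `ε_p` (the dual functional `ε*_p`). -/
def epsCoef (n : ℕ) (p : ℕ) (x : Gg n) : ℝ :=
  if h : 1 ≤ p ∧ p ≤ 2*n-6 then x.2.1 ⟨p-1, by omega⟩ else 0

/-- The 1-cochain `ε*_{n-3-k} ⊗ ε_{2n-6}`. -/
def cA (n k : ℕ) : MT n k → Gg n := fun x => epsCoef n (n-3-k) x.1 • bEps n (2*n-6)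

/-- The 1-cochain `X* ⊗ ε_{n-4-k}`. -/
def cB (n k : ℕ) : MT n k → Gg n := fun x => (x : Gg n).1 3 • bEps n (n-4-k)

/-- The 2-cochain `X* ∧ ε*_{n-1+k} ⊗ η`. -/
def cC (n k : ℕ) : MT n k → MT n k → Gg n := fun x y =>
  ((x : Gg n).1 3 * epsCoef n (n-1+k) y.1 - (y : Gg n).1 3 * epsCoef n (n-1+k) x.1) • bEta n

/-- The 2-cochain `ε*_{n-3-k} ∧ η* ⊗ ε_{2n-6}`. -/
def cD (n k : ℕ) : MT n k → MT n k → Gg n := fun x y =>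
  (epsCoef n (n-3-k) x.1 * (y : Gg n).2.2 - epsCoef n (n-3-k) y.1 * (x : Gg n).2.2) • bEps n (2*n-6)


set_option maxHeartbeats 3200000

lemma vec4_at0 (a b c d : ℝ) : (![a,b,c,d]) 0 = a := rfl
lemma vec4_at1 (a b c d : ℝ) : (![a,b,c,d]) 1 = b := rfl
lemma vec4_at2 (a b c d : ℝ) : (![a,b,c,d]) 2 = c := rfl
lemma vec4_at3 (a b c d : ℝ) : (![a,b,c,d]) 3 = d := rfl

lemma gl2Br_zero_left (b : G2) : gl2Br 0 b = 0 := by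
  funext i
  fin_cases i <;> simp [gl2Br]

lemma gl2Br_zero_right (a : G2) : gl2Br a 0 = 0 := by
  funext i
  fin_cases i <;> simp [gl2Br]

lemma phi_zero (n : ℕ) (v : Hs n) : phi n 0 v = 0 := by
  refine Prod.ext (funext fun i => ?_) ?_ <;> simp [phi]

lemma heisBr_eps_left (n p : ℕ) (hp1 : 1 ≤ p) (hp2 : p ≤ 2*n-6) (z : Hs n) :
    heisBr n (epsV n p) z = (0, (-1:ℝ)^p * z.1 ⟨2*n-6-p, by omega⟩) := by
  refine Prod.ext rfl ?_
  show ∑ i : Fin (2*n-6), (-1:ℝ)^(i.val+1) * (epsV n p).1 i * z.1 i.rev = _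
  rw [Finset.sum_eq_single (⟨p-1, by omega⟩ : Fin (2*n-6))]
  · have h2 : Fin.rev (⟨p-1, by omega⟩ : Fin (2*n-6)) = ⟨2*n-6-p, by omega⟩ := by
      apply Fin.ext
      show 2*n-6 - (p-1+1) = 2*n-6-p
      omega
    rw [h2]
    show (-1:ℝ)^((p-1)+1) * (if (p-1)+1 = p then 1 else 0) * z.1 ⟨2*n-6-p, by omega⟩
      = (-1:ℝ)^p * z.1 ⟨2*n-6-p, by omega⟩
    have he : (-1:ℝ)^((p-1)+1) = (-1:ℝ)^p := by rw [show p-1+1 = p by omega]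
    rw [if_pos (show (p-1)+1 = p by omega), he]
    ring
  · intro i _ hne
    have : ¬ (i.val + 1 = p) := fun h => hne (Fin.ext (show i.val = p - 1 by omega))
    show (-1:ℝ)^(i.val+1) * (if i.val + 1 = p then 1 else 0) * z.1 i.rev = 0
    rw [if_neg this]
    ring
  · intro h
    exact absurd (Finset.mem_univ _) h

lemma heisBr_smul_eps_right (n p : ℕ) (hp1 : 1 ≤ p) (hp2 : p ≤ 2*n-6) (z : Hs n) (c : ℝ) :
    heisBr n z (c • epsV n p) = (0, (-1:ℝ)^(2*n-5-p) * (c * z.1 ⟨2*n-6-p, by omega⟩)) := by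
  refine Prod.ext rfl ?_
  show ∑ i : Fin (2*n-6), (-1:ℝ)^(i.val+1) * z.1 i * (c • epsV n p).1 i.rev = _
  rw [Finset.sum_eq_single (⟨2*n-6-p, by omega⟩ : Fin (2*n-6))]
  · have h2 : Fin.rev (⟨2*n-6-p, by omega⟩ : Fin (2*n-6)) = ⟨p-1, by omega⟩ := by
      apply Fin.ext
      show 2*n-6 - (2*n-6-p+1) = p-1
      omega
    rw [h2]
    show (-1:ℝ)^((2*n-6-p)+1) * z.1 ⟨2*n-6-p, by omega⟩ * (c * (if (p-1)+1 = p then 1 else 0))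
      = (-1:ℝ)^(2*n-5-p) * (c * z.1 ⟨2*n-6-p, by omega⟩)
    have he : (-1:ℝ)^((2*n-6-p)+1) = (-1:ℝ)^(2*n-5-p) := by
      rw [show 2*n-6-p+1 = 2*n-5-p by omega]
    rw [if_pos (show (p-1)+1 = p by omega), he]
    ring
  · intro i _ hne
    have hlt := i.isLt
    have : ¬ ((i.rev : ℕ) + 1 = p) := by
      rw [Fin.val_rev]
      intro h
      exact hne (Fin.ext (show i.val = 2*n-6-p by omega))
    show (-1:ℝ)^(i.val+1) * z.1 i * (c * (if (i.rev : ℕ) + 1 = p then 1 else 0)) = 0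
    rw [if_neg this]
    ring
  · intro h
    exact absurd (Finset.mem_univ _) h

lemma phi_m_smul_eps (n : ℕ) (a : G2) (h0 : a 0 = 0) (h1 : a 1 = 0) (h2 : a 2 = 0)
    (c : ℝ) (p : ℕ) (hp : 1 ≤ p) :
    phi n a (c • epsV n p) = (c * a 3) • epsV n (p+1) := by
  refine Prod.ext (funext fun i => ?_) ?_
  · simp only [phi, h0, h1, h2, epsV, Prod.smul_fst, Prod.smul_snd, Pi.smul_apply,
      smul_eq_mul, zero_mul, mul_zero, zero_add, add_zero]
    split_ifs <;> first | ring1 | (exfalso; omega)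
  · simp [phi, epsV, h2]

lemma phi_m_smul_eta (n : ℕ) (a : G2) (h2 : a 2 = 0) (c : ℝ) :
    phi n a (c • etaV n) = 0 := by
  refine Prod.ext (funext fun i => ?_) ?_ <;>
    simp [phi, etaV, h2]

lemma gBr_eps_left (n p : ℕ) (hp1 : 1 ≤ p) (hp2 : p ≤ 2*n-6) (x : Gg n)
    (h0 : x.1 0 = 0) (h1 : x.1 1 = 0) (h2 : x.1 2 = 0) :
    gBr n (bEps n p) x
      = (0, (-(x.1 3)) • epsV n (p+1) + ((-1:ℝ)^p * x.2.1 ⟨2*n-6-p, by omega⟩) • etaV n) := by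
  refine Prod.ext ?_ ?_
  · show gl2Br 0 x.1 = 0
    exact gl2Br_zero_left _
  · show phi n 0 x.2 - phi n x.1 (epsV n p) + heisBr n (epsV n p) x.2 = _
    have hph : phi n x.1 (epsV n p) = (1 * x.1 3) • epsV n (p+1) := by
      have := phi_m_smul_eps n x.1 h0 h1 h2 1 p hp1
      rwa [one_smul] at this
    rw [phi_zero, hph, heisBr_eps_left n p hp1 hp2]
    refine Prod.ext (funext fun i => ?_) ?_ <;>
      · simp [epsV, etaV]
        try ring1

lemma gBr_m_smul_eps (n p : ℕ) (hp1 : 1 ≤ p) (hp2 : p ≤ 2*n-6) (x : Gg n)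
    (h0 : x.1 0 = 0) (h1 : x.1 1 = 0) (h2 : x.1 2 = 0) (c : ℝ) :
    gBr n x (c • bEps n p)
      = (0, (c * x.1 3) • epsV n (p+1)
          + ((-1:ℝ)^(2*n-5-p) * (c * x.2.1 ⟨2*n-6-p, by omega⟩)) • etaV n) := by
  have hsm : c • bEps n p = ((0 : G2), c • epsV n p) := by
    refine Prod.ext ?_ rfl
    show c • (0:G2) = 0
    simp
  rw [hsm]
  refine Prod.ext ?_ ?_
  · show gl2Br x.1 0 = 0
    exact gl2Br_zero_right _
  · show phi n x.1 (c • epsV n p) - phi n 0 x.2 + heisBr n x.2 (c • epsV n p) = _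
    rw [phi_zero, phi_m_smul_eps n x.1 h0 h1 h2 c p hp1,
      heisBr_smul_eps_right n p hp1 hp2 x.2 c]
    refine Prod.ext (funext fun i => ?_) ?_ <;>
      · simp [epsV, etaV]
        try ring1

lemma fin_app_congr {N : ℕ} (f : Fin N → ℝ) {a b : ℕ} {ha : a < N} {hb : b < N}
    (h : a = b) : f ⟨a, ha⟩ = f ⟨b, hb⟩ := by subst h; rfl

lemma epsCoef_eq (n p : ℕ) (hp : 1 ≤ p ∧ p ≤ 2*n-6) (x : Gg n) :
    epsCoef n p x = x.2.1 ⟨p-1, by omega⟩ := by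
  simp only [epsCoef]
  rw [dif_pos hp]

lemma ptoM_brA (n k : ℕ) (hn : 6 ≤ n) (hk : k ≤ n - 6) (x : MT n k) :
    (ptoM n k (gBr n (bEps n (n-4-k)) x.1) : Gg n)
      = (0, (-(x.1.1 3)) • epsV n (n-3-k)
           + ((-1:ℝ)^(n-4-k) * epsCoef n (n-1+k) x.1) • etaV n) := by
  obtain ⟨h0, h1, h2, -⟩ := x.2
  show Pm n k _ = _
  rw [gBr_eps_left n (n-4-k) (by omega) (by omega) x.1 h0 h1 h2,
    epsCoef_eq n (n-1+k) ⟨by omega, by omega⟩ x.1]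
  unfold Pm
  refine Prod.ext ?_ (Prod.ext (funext fun i => ?_) ?_)
  · funext j
    fin_cases j <;> simp
  · simp only []
    by_cases hc : (n:ℤ)-3-(k:ℤ) ≤ (i.val:ℤ)+1
    · rw [if_pos hc]
      simp only [Prod.fst_add, Pi.add_apply, Prod.smul_fst, Pi.smul_apply, smul_eq_mul,
        epsV, etaV, Pi.zero_apply, Prod.fst_zero]
      first
        | ring1
        | (split_ifs <;> first | ring1 | (exfalso; omega))
    · rw [if_neg hc]
      simp only [Prod.fst_add, Pi.add_apply, Prod.smul_fst, Pi.smul_apply, smul_eq_mul,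
        epsV, etaV, Pi.zero_apply, Prod.fst_zero]
      first
        | ring1
        | (split_ifs <;> first | ring1 | (exfalso; omega))
  · simp only []
    simp only [Prod.snd_add, Prod.smul_snd, smul_eq_mul, epsV, etaV]
    rw [fin_app_congr x.1.2.1 (show 2*n-6-(n-4-k) = n-1+k-1 by omega)]
    try ring1

lemma ptoM_brB (n k : ℕ) (hn : 6 ≤ n) (hk : k ≤ n - 6) (x : MT n k) :
    (ptoM n k (gBr n (bEps n 1) x.1) : Gg n)
      = (0, (-(epsCoef n (2*n-6) x.1)) • etaV n) := by
  obtain ⟨h0, h1, h2, -⟩ := x.2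
  show Pm n k _ = _
  rw [gBr_eps_left n 1 le_rfl (by omega) x.1 h0 h1 h2,
    epsCoef_eq n (2*n-6) ⟨by omega, le_rfl⟩ x.1]
  unfold Pm
  refine Prod.ext ?_ (Prod.ext (funext fun i => ?_) ?_)
  · funext j
    fin_cases j <;> simp
  · simp only []
    by_cases hc : (n:ℤ)-3-(k:ℤ) ≤ (i.val:ℤ)+1
    · rw [if_pos hc]
      simp only [Prod.fst_add, Pi.add_apply, Prod.smul_fst, Pi.smul_apply, smul_eq_mul,
        epsV, etaV, Pi.zero_apply, Prod.fst_zero]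
      first
        | ring1
        | (split_ifs <;> first | ring1 | (exfalso; omega))
    · rw [if_neg hc]
      simp only [Prod.fst_add, Pi.add_apply, Prod.smul_fst, Pi.smul_apply, smul_eq_mul,
        epsV, etaV, Pi.zero_apply, Prod.fst_zero]
      first
        | ring1
        | (split_ifs <;> first | ring1 | (exfalso; omega))
  · simp only []
    simp only [Prod.snd_add, Prod.smul_snd, smul_eq_mul, epsV, etaV]
    ring1

lemma gBr_epsA_top (n k : ℕ) (hn : 6 ≤ n) (hk : k ≤ n - 6) (c : ℝ) :
    gBr n (bEps n (n-4-k)) (c • bEps n (2*n-6)) = 0 := by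
  have hsm : c • bEps n (2*n-6) = ((0 : G2), c • epsV n (2*n-6)) := by
    refine Prod.ext ?_ rfl
    show c • (0:G2) = 0
    simp
  rw [hsm]
  refine Prod.ext ?_ ?_
  · show gl2Br 0 0 = 0
    exact gl2Br_zero_left _
  · show phi n 0 (c • epsV n (2*n-6)) - phi n 0 (epsV n (n-4-k))
        + heisBr n (epsV n (n-4-k)) (c • epsV n (2*n-6)) = 0
    rw [phi_zero, phi_zero, heisBr_eps_left n (n-4-k) (by omega) (by omega), sub_self,
      zero_add]
    refine Prod.ext rfl ?_
    show (-1:ℝ)^(n-4-k) * (c • epsV n (2*n-6)).1 ⟨2*n-6-(n-4-k), by omega⟩ = (0:ℝ)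
    simp only [Prod.smul_fst, Pi.smul_apply, smul_eq_mul, epsV]
    rw [if_neg (by omega)]
    ring1

lemma gBr_eps1_top (n k : ℕ) (hn : 6 ≤ n) (hk : k ≤ n - 6) (c : ℝ) :
    gBr n (bEps n 1) (c • bEps n (2*n-6)) = (-c) • bEta n := by
  have hsm : c • bEps n (2*n-6) = ((0 : G2), c • epsV n (2*n-6)) := by
    refine Prod.ext ?_ rfl
    show c • (0:G2) = 0
    simp
  rw [hsm]
  refine Prod.ext ?_ ?_
  · show gl2Br 0 0 = (((-c) • bEta n).1 : G2)
    rw [gl2Br_zero_left]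
    show (0:G2) = (-c) • (0:G2)
    simp
  · show phi n 0 (c • epsV n (2*n-6)) - phi n 0 (epsV n 1)
        + heisBr n (epsV n 1) (c • epsV n (2*n-6)) = ((-c) • bEta n).2
    rw [phi_zero, phi_zero, heisBr_eps_left n 1 le_rfl (by omega), sub_self, zero_add]
    refine Prod.ext ?_ ?_
    · show (0 : Fin (2*n-6) → ℝ) = ((-c) • etaV n).1
      funext i
      simp [etaV]
    · show (-1:ℝ)^1 * (c • epsV n (2*n-6)).1 ⟨2*n-6-1, by omega⟩ = ((-c) • etaV n).2
      simp only [Prod.smul_fst, Prod.smul_snd, Pi.smul_apply, smul_eq_mul, epsV, etaV, pow_one]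
      rw [if_pos (by omega)]
      ring1

lemma mBrM_X3 (n k : ℕ) (x y : MT n k) : (mBrM n k x y).1.1 3 = 0 := by
  obtain ⟨x0, x1, x2, -⟩ := x.2
  obtain ⟨y0, y1, y2, -⟩ := y.2
  show (![0, 0, 0, (gBr n x.1 y.1).1 3]) 3 = 0
  rw [vec4_at3]
  show (![ -2*((x.1).1 1 * (y.1).1 0 - (x.1).1 0 * (y.1).1 1),
          (x.1).1 3 * (y.1).1 0 - (x.1).1 0 * (y.1).1 3, 0,
          2*((x.1).1 1 * (y.1).1 3 - (x.1).1 3 * (y.1).1 1)]) 3 = 0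
  rw [vec4_at3, x1, y1]
  ring1

lemma sgn_rel (n k : ℕ) (hn : 6 ≤ n) (hk : k ≤ n - 6) :
    (-1:ℝ)^(2*n-5-(n-4-k)) = -(-1:ℝ)^(n-4-k) := by
  rw [show 2*n-5-(n-4-k) = (n-4-k) + (2*(k+1)+1) by omega, pow_add, pow_succ, pow_mul]
  norm_num

lemma evalA_X (n k : ℕ) (hn : 6 ≤ n) (hk : k ≤ n - 6) (x : MT n k) :
    (ptoM n k (gBr n (bEps n (n-4-k)) x.1)).1.1 3 = 0 := by
  rw [ptoM_brA n k hn hk x]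
  rfl

lemma evalA_eta (n k : ℕ) (hn : 6 ≤ n) (hk : k ≤ n - 6) (x : MT n k) :
    (ptoM n k (gBr n (bEps n (n-4-k)) x.1)).1.2.2
      = (-1:ℝ)^(n-4-k) * epsCoef n (n-1+k) x.1 := by
  rw [ptoM_brA n k hn hk x]
  simp [epsV, etaV]

lemma evalA_eps3 (n k : ℕ) (hn : 6 ≤ n) (hk : k ≤ n - 6) (x : MT n k) :
    epsCoef n (n-3-k) (ptoM n k (gBr n (bEps n (n-4-k)) x.1)).1 = -(x.1.1 3) := by
  rw [ptoM_brA n k hn hk x, epsCoef_eq n (n-3-k) ⟨by omega, by omega⟩]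
  simp only [Prod.fst_add, Pi.add_apply, Prod.smul_fst, Pi.smul_apply, smul_eq_mul,
    epsV, etaV, Pi.zero_apply, Prod.fst_zero]
  rw [if_pos (show n-3-k-1+1 = n-3-k by omega)]
  ring1

lemma evalA_epsE (n k : ℕ) (hn : 6 ≤ n) (hk : k ≤ n - 6) (x : MT n k) :
    epsCoef n (n-1+k) (ptoM n k (gBr n (bEps n (n-4-k)) x.1)).1 = 0 := by
  rw [ptoM_brA n k hn hk x, epsCoef_eq n (n-1+k) ⟨by omega, by omega⟩]
  simp only [Prod.fst_add, Pi.add_apply, Prod.smul_fst, Pi.smul_apply, smul_eq_mul,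
    epsV, etaV, Pi.zero_apply, Prod.fst_zero]
  rw [if_neg (show ¬(n-1+k-1+1 = n-3-k) by omega)]
  ring1

lemma evalB_X (n k : ℕ) (hn : 6 ≤ n) (hk : k ≤ n - 6) (x : MT n k) :
    (ptoM n k (gBr n (bEps n 1) x.1)).1.1 3 = 0 := by
  rw [ptoM_brB n k hn hk x]
  rfl

lemma evalB_epsE (n k : ℕ) (hn : 6 ≤ n) (hk : k ≤ n - 6) (x : MT n k) :
    epsCoef n (n-1+k) (ptoM n k (gBr n (bEps n 1) x.1)).1 = 0 := by
  rw [ptoM_brB n k hn hk x, epsCoef_eq n (n-1+k) ⟨by omega, by omega⟩]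
  simp [etaV]

def D1f (n k : ℕ) : MT n k → MT n k → Gg n := fun x y =>
  ((x : Gg n).1 3 * (y : Gg n).2.2 - (y : Gg n).1 3 * (x : Gg n).2.2
    - (-1:ℝ)^(n-4-k) * (epsCoef n (n-3-k) x.1 * epsCoef n (n-1+k) y.1
        - epsCoef n (n-3-k) y.1 * epsCoef n (n-1+k) x.1)) • bEps n (2*n-6)

def D2f (n k : ℕ) : MT n k → MT n k → Gg n := fun x y =>
  ((-2) * (-1:ℝ)^(n-4-k) * ((x : Gg n).1 3 * epsCoef n (n-1+k) y.1
      - (y : Gg n).1 3 * epsCoef n (n-1+k) x.1)) • bEps n (2*n-6)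

def D3f (n k : ℕ) : MT n k → MT n k → Gg n := fun x y =>
  (2 * (-1:ℝ)^(n-4-k) * ((x : Gg n).1 3 * epsCoef n (n-1+k) y.1
      - (y : Gg n).1 3 * epsCoef n (n-1+k) x.1)) • bEta n

def Cf (n k : ℕ) : MT n k → MT n k → Gg n := fun x y =>
  ((-1:ℝ)^(n-4-k) * ((x : Gg n).1 3 * epsCoef n (n-1+k) y.1
      - (y : Gg n).1 3 * epsCoef n (n-1+k) x.1)) • bEta n

lemma step1 (n k : ℕ) (hn : 6 ≤ n) (hk : k ≤ n - 6) :
    act2 n k (bEps n (n-4-k)) (cD n k) = D1f n k := by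
  funext x y
  show gBr n (bEps n (n-4-k)) (cD n k x y)
      - cD n k (ptoM n k (gBr n (bEps n (n-4-k)) x.1)) y
      - cD n k x (ptoM n k (gBr n (bEps n (n-4-k)) y.1)) = D1f n k x y
  unfold cD D1f
  rw [gBr_epsA_top n k hn hk,
    evalA_eps3 n k hn hk x, evalA_eps3 n k hn hk y,
    evalA_eta n k hn hk x, evalA_eta n k hn hk y]
  module

lemma step2 (n k : ℕ) (hn : 6 ≤ n) (hk : k ≤ n - 6) :
    act2 n k (bEps n (n-4-k)) (D1f n k) = D2f n k := by
  funext x y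
  show gBr n (bEps n (n-4-k)) (D1f n k x y)
      - D1f n k (ptoM n k (gBr n (bEps n (n-4-k)) x.1)) y
      - D1f n k x (ptoM n k (gBr n (bEps n (n-4-k)) y.1)) = D2f n k x y
  unfold D1f D2f
  rw [gBr_epsA_top n k hn hk,
    evalA_eps3 n k hn hk x, evalA_eps3 n k hn hk y,
    evalA_eta n k hn hk x, evalA_eta n k hn hk y,
    evalA_epsE n k hn hk x, evalA_epsE n k hn hk y,
    evalA_X n k hn hk x, evalA_X n k hn hk y]
  module

lemma step3 (n k : ℕ) (hn : 6 ≤ n) (hk : k ≤ n - 6) :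
    act2 n k (bEps n 1) (D2f n k) = D3f n k := by
  funext x y
  show gBr n (bEps n 1) (D2f n k x y)
      - D2f n k (ptoM n k (gBr n (bEps n 1) x.1)) y
      - D2f n k x (ptoM n k (gBr n (bEps n 1) y.1)) = D3f n k x y
  unfold D2f D3f
  rw [gBr_eps1_top n k hn hk,
    evalB_X n k hn hk x, evalB_X n k hn hk y,
    evalB_epsE n k hn hk x, evalB_epsE n k hn hk y]
  module

lemma stepB (n k : ℕ) (hn : 6 ≤ n) (hk : k ≤ n - 6) :
    cobound n k (cB n k) = Cf n k := by
  funext x y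
  obtain ⟨x0, x1, x2, -⟩ := x.2
  obtain ⟨y0, y1, y2, -⟩ := y.2
  show gBr n x.1 (cB n k y) - gBr n y.1 (cB n k x) + cB n k (mBrM n k x y) = Cf n k x y
  unfold cB Cf
  rw [mBrM_X3 n k x y, zero_smul, add_zero,
    gBr_m_smul_eps n (n-4-k) (by omega) (by omega) x.1 x0 x1 x2 ((y : Gg n).1 3),
    gBr_m_smul_eps n (n-4-k) (by omega) (by omega) y.1 y0 y1 y2 ((x : Gg n).1 3),
    sgn_rel n k hn hk,
    epsCoef_eq n (n-1+k) ⟨by omega, by omega⟩ x.1,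
    epsCoef_eq n (n-1+k) ⟨by omega, by omega⟩ y.1,
    fin_app_congr (hb := by omega) x.1.2.1 (show 2*n-6-(n-4-k) = n-1+k-1 by omega),
    fin_app_congr (hb := by omega) y.1.2.1 (show 2*n-6-(n-4-k) = n-1+k-1 by omega)]
  refine Prod.ext ?_ (Prod.ext (funext fun i => ?_) ?_)
  · funext j
    simp [bEta]
  · simp only [bEta, etaV, epsV, Prod.fst_add, Prod.fst_sub, Pi.add_apply, Pi.sub_apply,
      Prod.smul_fst, Pi.smul_apply, smul_eq_mul, Prod.snd_add, Prod.snd_sub, Prod.smul_snd,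
      Pi.zero_apply, Prod.fst_zero, Prod.snd_zero]
    first | ring1 | (split_ifs <;> first | ring1 | (exfalso; omega))
  · simp only [bEta, etaV, epsV, Prod.fst_add, Prod.fst_sub, Pi.add_apply, Pi.sub_apply,
      Prod.smul_fst, Pi.smul_apply, smul_eq_mul, Prod.snd_add, Prod.snd_sub, Prod.smul_snd,
      Pi.zero_apply, Prod.fst_zero, Prod.snd_zero]
    first | ring1 | (split_ifs <;> first | ring1 | (exfalso; omega))

lemma D3f_eq (n k : ℕ) : D3f n k = (2:ℝ) • Cf n k := by
  funext x y
  show D3f n k x y = (2:ℝ) • Cf n k x y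
  unfold D3f Cf
  module

/-- Evaluation of the `X`-coordinate, as a linear map. -/
def X3map (n : ℕ) : Gg n →ₗ[ℝ] ℝ where
  toFun := fun v => v.1 3
  map_add' := fun a b => rfl
  map_smul' := fun c a => rfl

/-- The map `v ↦ X*(v) • ε_{n-4-k}`, as a linear map. -/
def LcbMap (n k : ℕ) : Gg n →ₗ[ℝ] Gg n := (X3map n).smulRight (bEps n (n-4-k))

lemma X3_vanish (n k : ℕ) (p : ℤ) (hp : p ≠ -1) :
    gComp n k p ≤ LinearMap.ker (X3map n) := by
  unfold gComp
  rw [Submodule.span_le]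
  rintro v (⟨rfl, hw⟩ | ⟨hv, hw⟩ | ⟨rfl, hw⟩ | ⟨q, hq1, hq2, rfl, hw⟩ | ⟨rfl, hw⟩)
  · exact rfl
  · rcases hv with rfl | rfl <;> exact rfl
  · exact absurd hw hp
  · exact rfl
  · exact rfl

lemma cB_homog (n k : ℕ) (hn : 6 ≤ n) (hk : k ≤ n - 6) (p : ℤ) (hp : p < 0)
    (v : Gg n) (hv : v ∈ gComp n k p) :
    v.1 3 • bEps n (n-4-k) ∈ gComp n k (p + 1) := by
  by_cases h1 : p = -1
  · subst h1
    have hle : gComp n k (-1) ≤ Submodule.comap (LcbMap n k) (gComp n k (-1 + 1)) := by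
      unfold gComp
      rw [Submodule.span_le]
      rintro w (⟨rfl, hw⟩ | ⟨hw', hw⟩ | ⟨rfl, hw⟩ | ⟨q, hq1, hq2, rfl, hw⟩ | ⟨rfl, hw⟩)
      · exact absurd hw (by norm_num)
      · exact absurd hw (by norm_num)
      · show LcbMap n k (bX n) ∈ gComp n k 0
        have hL : LcbMap n k (bX n) = bEps n (n-4-k) := by
          show (bX n).1 3 • bEps n (n-4-k) = bEps n (n-4-k)
          show (1:ℝ) • bEps n (n-4-k) = bEps n (n-4-k)
          rw [one_smul]
        rw [hL]
        exact Submodule.subset_span (Or.inr (Or.inr (Or.inr (Or.inl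
          ⟨n-4-k, by omega, by omega, rfl, by omega⟩))))
      · show LcbMap n k (bEps n q) ∈ gComp n k 0
        have hL : LcbMap n k (bEps n q) = 0 := by
          show (bEps n q).1 3 • bEps n (n-4-k) = 0
          show (0:ℝ) • bEps n (n-4-k) = 0
          rw [zero_smul]
        rw [hL]
        exact Submodule.zero_mem _
      · show LcbMap n k (bEta n) ∈ gComp n k 0
        have hL : LcbMap n k (bEta n) = 0 := by
          show (bEta n).1 3 • bEps n (n-4-k) = 0
          show (0:ℝ) • bEps n (n-4-k) = 0
          rw [zero_smul]
        rw [hL]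
        exact Submodule.zero_mem _
    exact hle hv
  · have hz : v.1 3 = 0 := X3_vanish n k p h1 hv
    rw [hz, zero_smul]
    exact Submodule.zero_mem _

lemma cB_mem_C1plus (n k : ℕ) (hn : 6 ≤ n) (hk : k ≤ n - 6) : cB n k ∈ C1plus n k := by
  apply Submodule.subset_span
  refine ⟨⟨fun x y => ?_, fun c x => ?_⟩, 1, one_pos, fun p hp x hx => ?_⟩
  · show ((x + y : MT n k) : Gg n).1 3 • bEps n (n-4-k)
      = (x : Gg n).1 3 • bEps n (n-4-k) + (y : Gg n).1 3 • bEps n (n-4-k)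
    rw [Submodule.coe_add]
    show ((x : Gg n).1 3 + (y : Gg n).1 3) • bEps n (n-4-k) = _
    rw [add_smul]
  · show ((c • x : MT n k) : Gg n).1 3 • bEps n (n-4-k)
      = c • ((x : Gg n).1 3 • bEps n (n-4-k))
    rw [Submodule.coe_smul]
    show (c * (x : Gg n).1 3) • bEps n (n-4-k) = _
    rw [mul_smul]
  · exact cB_homog n k hn hk p hp _ hx

lemma cobound_cB_mem (n k : ℕ) (hn : 6 ≤ n) (hk : k ≤ n - 6) :
    cobound n k (cB n k) ∈ imDel n k :=
  Submodule.subset_span ⟨cB n k, cB_mem_C1plus n k hn hk, rfl⟩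

lemma bEps_mem_g0 (n k : ℕ) (hn : 6 ≤ n) (hk : k ≤ n - 6) (p : ℕ) (hp : p ≤ n-4-k) :
    bEps n p ∈ g0Sub n k := by
  refine ⟨rfl, rfl, fun i hi => ?_⟩
  show (if i.val + 1 = p then (1:ℝ) else 0) = 0
  rw [if_neg (by omega)]

lemma Cf_ne (n k : ℕ) (hn : 6 ≤ n) (hk : k ≤ n - 6) : D3f n k ≠ 0 := by
  intro h0
  set x0 : MT n k := ⟨bX n, ⟨rfl, rfl, rfl, fun i _ => rfl⟩⟩ with hx0
  set y0 : MT n k := ⟨bEps n (n-1+k), ⟨rfl, rfl, rfl, fun i hi => by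
    show (if i.val + 1 = n-1+k then (1:ℝ) else 0) = 0
    rw [if_neg (by omega)]⟩⟩ with hy0
  have he := congrFun (congrFun h0 x0) y0
  have he2 : (D3f n k x0 y0).2.2 = 0 := by rw [he]; rfl
  unfold D3f at he2
  rw [epsCoef_eq n (n-1+k) ⟨by omega, by omega⟩ (x0 : Gg n),
    epsCoef_eq n (n-1+k) ⟨by omega, by omega⟩ (y0 : Gg n)] at he2
  have hx3 : (x0 : Gg n).1 3 = 1 := rfl
  have hy3 : (y0 : Gg n).1 3 = 0 := rfl
  have hxe : (x0 : Gg n).2.1 ⟨n-1+k-1, by omega⟩ = 0 := rfl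
  have hye : (y0 : Gg n).2.1 ⟨n-1+k-1, by omega⟩ = (1:ℝ) := by
    show (if n-1+k-1 + 1 = n-1+k then (1:ℝ) else 0) = 1
    rw [if_pos (by omega)]
  rw [hx3, hy3, hxe, hye] at he2
  have hbe : ((2 * (-1:ℝ)^(n-4-k) * (1 * 1 - 0 * 0)) • bEta n).2.2
      = 2 * (-1:ℝ)^(n-4-k) * (1 * 1 - 0 * 0) := by
    show 2 * (-1:ℝ)^(n-4-k) * (1 * 1 - 0 * 0) * 1 = _
    rw [mul_one]
  rw [hbe] at he2
  have hs : ((-1:ℝ))^(n-4-k) ≠ 0 := pow_ne_zero _ (by norm_num)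
  apply hs
  nlinarith [he2]


/-- for `0 ≤ k ≤ n-6`, there is a nonzero real `c` with
`ε_1 · (ε_{n-4-k} · (ε_{n-4-k} · (ε*_{n-3-k} ∧ η* ⊗ ε_{2n-6}))) = c · ∂(X* ⊗ ε_{n-4-k})`
(where `·` denotes the `g⁰`-action on 2-cochains); in particular, every `g⁰`-invariant
subspace of `C²(m,g)` containing `ε*_{n-3-k} ∧ η* ⊗ ε_{2n-6}` contains a nonzero element
of `∂(C¹₊(m,g))`. -/
theorem action_sends_cD_into_image_of_cobound (n k : ℕ) (hn : 6 ≤ n) (hk : k ≤ n - 6) :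
    (∃ c : ℝ, c ≠ 0 ∧
      act2 n k (bEps n 1)
        (act2 n k (bEps n (n-4-k)) (act2 n k (bEps n (n-4-k)) (cD n k))) =
      c • cobound n k (cB n k)) ∧
    (∀ N : Submodule ℝ (MT n k → MT n k → Gg n),
      (∀ A ∈ g0Sub n k, ∀ ψ ∈ N, act2 n k A ψ ∈ N) → cD n k ∈ N →
      ∃ ψ, ψ ∈ N ∧ ψ ∈ imDel n k ∧ ψ ≠ 0) := by
  have hchain : act2 n k (bEps n 1)
      (act2 n k (bEps n (n-4-k)) (act2 n k (bEps n (n-4-k)) (cD n k))) = D3f n k := by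
    rw [step1 n k hn hk, step2 n k hn hk, step3 n k hn hk]
  constructor
  · refine ⟨2, two_ne_zero, ?_⟩
    rw [hchain, stepB n k hn hk]
    exact D3f_eq n k
  · intro N hNact hNcD
    have hm1 : bEps n (n-4-k) ∈ g0Sub n k := bEps_mem_g0 n k hn hk _ le_rfl
    have hm2 : bEps n 1 ∈ g0Sub n k := bEps_mem_g0 n k hn hk 1 (by omega)
    refine ⟨act2 n k (bEps n 1)
        (act2 n k (bEps n (n-4-k)) (act2 n k (bEps n (n-4-k)) (cD n k))),
      hNact _ hm2 _ (hNact _ hm1 _ (hNact _ hm1 _ hNcD)), ?_, ?_⟩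
    · rw [hchain, D3f_eq n k, ← stepB n k hn hk]
      exact Submodule.smul_mem _ _ (cobound_cB_mem n k hn hk)
    · rw [hchain]
      exact Cf_ne n k hn hk
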